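/- arXiv:2102.13075 — 2 statements merged into one kernel-verified Lean document; each statement's English description precedes it below -/
import Mathlib

section
/- For every imprecise probability tree 𝒫, every situation s, and every pointwise non-increasing sequence (f_n) of finitary gambles with pointwise limit f = inf_n f_n, one has lim_{n→∞} Ē_𝒫(f_n|s) = Ē_𝒫(f|s). -/
open Filter MeasureTheory Topology
open scoped ENNReal

namespace UEPaper

variable {X : Type} [Fintype X] [Nonempty X] [DecidableEq X]

/-- The set of paths: infinite sequences of states (`ω i` is the `(i+1)`-th state). -/
abbrev Path (X : Type) := ℕ → X

/-- The prefix `ω^k` of length `k` of a path, as a list (a situation). -/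
def prefixList (ω : Path X) (k : ℕ) : List X := (List.range k).map ω

/-- The cylinder event `Γ(s)` of a situation `s`. -/
def cyl (s : List X) : Set (Path X) := {ω | prefixList ω s.length = s}

/-- `f` is `n`-measurable: it depends only on the first `n` states. -/
def NMeas (n : ℕ) (f : Path X → EReal) : Prop :=
  ∀ ω ω' : Path X, prefixList ω n = prefixList ω' n → f ω = f ω'

/-- A gamble: a bounded real-valued global variable. -/
def IsGamble (f : Path X → EReal) : Prop :=
  ∃ B : ℝ, ∀ ω, -(B : EReal) ≤ f ω ∧ f ω ≤ (B : EReal)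

/-- A finitary gamble: an `n`-measurable gamble for some `n`. -/
def IsFinGamble (f : Path X → EReal) : Prop :=
  (∃ n, NMeas n f) ∧ IsGamble f

/-- An upper expectation tree: a coherent upper expectation at each situation. -/
structure UpperExpTree (X : Type) [Fintype X] [Nonempty X] where
  Q : List X → (X → ℝ) → ℝ
  le_sup : ∀ (s : List X) (f : X → ℝ), Q s f ≤ ⨆ x, f x
  subadd : ∀ (s : List X) (f g : X → ℝ), Q s (f + g) ≤ Q s f + Q s g
  pos_homog : ∀ (s : List X) (l : ℝ) (f : X → ℝ), 0 ≤ l → Q s (l • f) = l * Q s f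

/-- A (real-valued) supermartingale for the upper expectation tree `Q`. -/
def IsSupermart (Q : UpperExpTree X) (M : List X → ℝ) : Prop :=
  ∀ s : List X, Q.Q s (fun x => M (s ++ [x])) ≤ M s

/-- The game-theoretic upper expectation of a real-valued variable (used on gambles):
the infimum of `M s` over bounded-below supermartingales `M` with
`liminf_k M(ω^k) ≥ f(ω)` on `Γ(s)`. -/
noncomputable def gtG (Q : UpperExpTree X) (f : Path X → ℝ) (s : List X) : EReal :=
  sInf {a : EReal | ∃ M : List X → ℝ, IsSupermart Q M ∧ (∃ B : ℝ, ∀ t, B ≤ M t) ∧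
    (∀ ω ∈ cyl s,
      (f ω : EReal) ≤ Filter.liminf (fun k => ((M (prefixList ω k) : ℝ) : EReal)) atTop) ∧
    a = ((M s : ℝ) : EReal)}

/-- Extension to bounded-below variables, by continuity w.r.t. upper cuts:
`Ē(f|s) = lim_{c → +∞} Ē(min(f,c)|s)` (the limit of this nondecreasing net is a supremum). -/
noncomputable def gtBB (Q : UpperExpTree X) (f : Path X → EReal) (s : List X) : EReal :=
  ⨆ c : ℝ, gtG Q (fun ω => (f ω ⊓ (c : EReal)).toReal) s

/-- The game-theoretic global upper expectation `Ē_Q̄`, extended to all extended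
real variables by continuity w.r.t. lower cuts:
`Ē(f|s) = lim_{c → −∞} Ē(max(f,c)|s)` (the limit of this nonincreasing net is an infimum). -/
noncomputable def gtUE (Q : UpperExpTree X) (f : Path X → EReal) (s : List X) : EReal :=
  ⨅ c : ℝ, gtBB Q (fun ω => f ω ⊔ (c : EReal)) s

/-- A precise probability tree: a probability mass function at each situation. -/
structure PreciseTree (X : Type) [Fintype X] where
  p : List X → X → ℝ
  nonneg : ∀ (s : List X) (x : X), 0 ≤ p s x
  sum_one : ∀ s : List X, ∑ x, p s x = 1

/-- An imprecise probability tree: a nonempty closed convex set of probability mass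
functions at each situation. -/
structure ImpreciseTree (X : Type) [Fintype X] where
  sets : List X → Set (X → ℝ)
  nonempty' : ∀ s : List X, (sets s).Nonempty
  closed' : ∀ s : List X, IsClosed (sets s)
  convex' : ∀ s : List X, Convex ℝ (sets s)
  prob' : ∀ s : List X, ∀ q ∈ sets s, (∀ x, 0 ≤ q x) ∧ ∑ x, q x = 1

/-- `p ∼ 𝒫`: the precise tree `p` is compatible with the imprecise tree `P`. -/
def Compatible (p : PreciseTree X) (P : ImpreciseTree X) : Prop :=
  ∀ s : List X, p.p s ∈ P.sets s

/-- The probability `P_p(Γ(z)|s)` of the cylinder of `z` conditional on situation `s`. -/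
noncomputable def cylProb (p : List X → X → ℝ) (s z : List X) : ℝ :=
  if s.length < z.length ∧ z.take s.length = s then
    ∏ i ∈ Finset.Ico s.length z.length, p (z.take i) (z.getD i (Classical.arbitrary X))
  else if z.length ≤ s.length ∧ s.take z.length = z then 1 else 0

/-- The σ-algebra `ℱ` on paths generated by the cylinder events. -/
instance cylSigma : MeasurableSpace (Path X) :=
  MeasurableSpace.generateFrom {A | ∃ s : List X, A = cyl s}

/-- `μ` is the probability measure `P_p(·|s)` on `ℱ` determined by the tree `p`. -/
def IsTreeMeasure (p : PreciseTree X) (s : List X) (μ : Measure (Path X)) : Prop :=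
  IsProbabilityMeasure μ ∧ ∀ z : List X, μ (cyl z) = ENNReal.ofReal (cylProb p.p s z)

/-- Positive part of an extended real, in `ℝ≥0∞`. -/
noncomputable def posPart (x : EReal) : ℝ≥0∞ := if x = ⊤ then ⊤ else ENNReal.ofReal x.toReal

/-- The Lebesgue integral `∫ g dμ = ∫ g⁺ dμ − ∫ g⁻ dμ` of an extended-real variable
(well-defined, with value in `(-∞, +∞]`, for bounded-below measurable `g`). -/
noncomputable def integralE (μ : Measure (Path X)) (g : Path X → EReal) : EReal :=
  ((∫⁻ ω, posPart (g ω) ∂μ : ℝ≥0∞) : EReal) - ((∫⁻ ω, posPart (-(g ω)) ∂μ : ℝ≥0∞) : EReal)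

/-- The upper integral `Ē_p(f|s)`: infimum of integrals of bounded-below
`ℱ`-measurable variables dominating `f`. -/
noncomputable def upperInt (μ : Measure (Path X)) (f : Path X → EReal) : EReal :=
  sInf {a : EReal | ∃ g : Path X → EReal, Measurable g ∧ (∃ B : ℝ, ∀ ω, (B : EReal) ≤ g ω) ∧
    (∀ ω, f ω ≤ g ω) ∧ a = integralE μ g}

/-- The measure-theoretic global upper expectation `Ē_𝒫(f|s)`, given the assignment
`Pm` of the measures `P_p(·|s)` to precise trees: the upper envelope of the upper
integrals over all compatible precise trees. -/
noncomputable def muUE (Pm : PreciseTree X → List X → Measure (Path X))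
    (P : ImpreciseTree X) (f : Path X → EReal) (s : List X) : EReal :=
  ⨆ (p : PreciseTree X) (_ : Compatible p P), upperInt (Pm p s) f

/-- The trees `P` and `Q` agree: each `Q̄_s` is the upper envelope of the expectations
corresponding to the credal set `𝒫_s`. -/
def Agree (P : ImpreciseTree X) (Q : UpperExpTree X) : Prop :=
  ∀ (s : List X) (f : X → ℝ),
    Q.Q s f = sSup {r : ℝ | ∃ q ∈ P.sets s, r = ∑ x, f x * q x}

/-- Axioms P1–P5 for a global upper expectation `E` w.r.t. the tree `Q`. -/
structure Axioms (Q : UpperExpTree X) (E : (Path X → EReal) → List X → EReal) : Prop where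
  p1 : ∀ (f : X → ℝ) (s : List X),
    E (fun ω => ((f (ω s.length) : ℝ) : EReal)) s = ((Q.Q s f : ℝ) : EReal)
  p2 : ∀ f : Path X → EReal, IsFinGamble f → ∀ s : List X, E f s = E ((cyl s).indicator f) s
  p3 : ∀ f : Path X → EReal, IsFinGamble f → ∀ s : List X,
    E f s ≤ E (fun ω => E f (prefixList ω (s.length + 1))) s
  p4 : ∀ f g : Path X → EReal, (∀ ω, f ω ≤ g ω) → ∀ s : List X, E f s ≤ E g s
  p5 : ∀ (s : List X) (fn : ℕ → Path X → EReal) (f : Path X → EReal),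
    (∀ n, IsFinGamble (fn n)) → (∃ B : ℝ, ∀ n ω, (B : EReal) ≤ fn n ω) →
    (∀ ω, Tendsto (fun n => fn n ω) atTop (nhds (f ω))) →
    E f s ≤ limsup (fun n => E (fn n) s) atTop

/-- Upper semicontinuity of an extended-real variable on the path space. -/
def USC [TopologicalSpace X] [DiscreteTopology X] (f : Path X → EReal) : Prop :=
  ∀ a : ℝ, IsOpen {ω : Path X | f ω < (a : EReal)}

/-- An `Ω`-capacity (Dellacherie): a monotone `[0,∞]`-valued functional on nonnegative
variables, continuous along nondecreasing sequences, and continuous along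
nonincreasing sequences of nonnegative real-valued upper semicontinuous functions. -/
def IsCapacity [TopologicalSpace X] [DiscreteTopology X]
    (F : (Path X → EReal) → EReal) : Prop :=
  (∀ f : Path X → EReal, (∀ ω, 0 ≤ f ω) → 0 ≤ F f) ∧
  (∀ f g : Path X → EReal, (∀ ω, 0 ≤ f ω) → (∀ ω, 0 ≤ g ω) → (∀ ω, f ω ≤ g ω) → F f ≤ F g) ∧
  (∀ fn : ℕ → Path X → EReal, (∀ n ω, 0 ≤ fn n ω) → Monotone fn →
    Tendsto (fun n => F (fn n)) atTop (nhds (F (fun ω => ⨆ n, fn n ω)))) ∧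
  (∀ fn : ℕ → Path X → EReal, (∀ n ω, 0 ≤ fn n ω ∧ fn n ω < ⊤) → (∀ n, USC (fn n)) →
    Antitone fn →
    Tendsto (fun n => F (fn n)) atTop (nhds (F (fun ω => ⨅ n, fn n ω))))

open Classical in
/-- The metric `δ(ω,ω') = 2^{-n}`, `n` the first (1-based) index where `ω` and `ω'` differ. -/
noncomputable def delta (ω ω' : Path X) : ℝ :=
  if h : ω = ω' then 0
  else (1 / 2 : ℝ) ^ (Nat.find (Function.ne_iff.mp h) + 1)

/-- The product topology on the path space (with `X` discrete). -/
def prodTop (X : Type) : TopologicalSpace (ℕ → X) :=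
  @Pi.topologicalSpace ℕ (fun _ => X) (fun _ => ⊥)

set_option linter.unusedSectionVars false
set_option maxHeartbeats 1000000

/-! ### Auxiliary lemmas about `posPart` -/

lemma posPart_coe' (r : ℝ) : posPart (r : EReal) = ENNReal.ofReal r := by
  simp [posPart]

lemma posPart_ne_top' {x : EReal} (hx : x ≠ ⊤) : posPart x = ENNReal.ofReal x.toReal := by
  simp [posPart, hx]

lemma posPart_mono' : Monotone posPart := by
  intro a b hab
  rcases eq_or_ne b ⊤ with hb | hb
  · simp [posPart, hb]
  · rw [posPart_ne_top' hb, posPart_ne_top' (by rintro rfl; exact hb (top_le_iff.mp hab))]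
    rcases eq_or_ne a ⊥ with ha | ha
    · simp [ha]
    · exact ENNReal.ofReal_le_ofReal (EReal.toReal_le_toReal hab ha hb)

lemma measurable_posPart' : Measurable posPart := by
  unfold posPart
  exact Measurable.ite (by simp [MeasurableSet.singleton, Set.setOf_eq_eq_singleton])
    measurable_const (ENNReal.measurable_ofReal.comp measurable_ereal_toReal)

lemma ereal_toReal_nonpos {x : EReal} (hx : x ≤ 0) : x.toReal ≤ 0 := by
  induction x with
  | bot => simp
  | coe r => simpa using hx
  | top => simp at hx

lemma posPart_eq_zero' {x : EReal} (hx : x ≤ 0) : posPart x = 0 := by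
  rw [posPart_ne_top' (by rintro rfl; simp at hx), ENNReal.ofReal_eq_zero]
  exact ereal_toReal_nonpos hx

lemma posPart_iInf' (x : ℕ → EReal) : posPart (⨅ n, x n) = ⨅ n, posPart (x n) := by
  refine le_antisymm (le_iInf fun n => posPart_mono' (iInf_le _ n)) ?_
  set y := ⨅ n, x n with hy
  rcases eq_or_ne y ⊤ with h | h
  · have hxt : ∀ n, x n = ⊤ := fun n => top_le_iff.mp (h ▸ iInf_le x n)
    simp [posPart, hxt, h]
  rcases lt_or_ge y 0 with hneg | hpos
  · obtain ⟨n, hn⟩ := iInf_lt_iff.mp hneg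
    calc ⨅ n, posPart (x n) ≤ posPart (x n) := iInf_le _ n
    _ = 0 := posPart_eq_zero' hn.le
    _ ≤ posPart y := zero_le
  · by_contra hlt
    push_neg at hlt
    obtain ⟨r, hr0, hr1, hr2⟩ := ENNReal.lt_iff_exists_real_btwn.mp hlt
    rw [posPart_ne_top' h] at hr1
    have htr : y.toReal < r := by
      by_contra h'
      exact absurd (ENNReal.ofReal_le_ofReal (not_lt.mp h')) (not_le.mpr hr1)
    have hyr : y < (r : EReal) := by
      rw [← EReal.coe_toReal h (by intro hb; rw [hb] at hpos; simp at hpos)]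
      exact_mod_cast htr
    obtain ⟨n, hn⟩ := iInf_lt_iff.mp hyr
    have hle : posPart (x n) ≤ ENNReal.ofReal r := by
      rw [← posPart_coe' r]; exact posPart_mono' hn.le
    exact absurd ((iInf_le _ n).trans hle) (not_le.mpr hr2)

lemma posPart_iSup' (x : ℕ → EReal) : posPart (⨆ n, x n) = ⨆ n, posPart (x n) := by
  refine le_antisymm ?_ (iSup_le fun n => posPart_mono' (le_iSup _ n))
  set y := ⨆ n, x n with hy
  rcases eq_or_ne y ⊤ with h | h
  · have hub : ∀ r : ℝ, ENNReal.ofReal r ≤ ⨆ n, posPart (x n) := by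
      intro r
      have hry : (r : EReal) < y := h ▸ EReal.coe_lt_top r
      obtain ⟨n, hn⟩ := lt_iSup_iff.mp hry
      exact le_trans (by rw [← posPart_coe' r]; exact posPart_mono' hn.le) (le_iSup _ n)
    rcases eq_or_ne (⨆ n, posPart (x n)) ⊤ with h2 | h2
    · simp [h2]
    · exfalso
      have h3 := hub ((⨆ n, posPart (x n)).toReal + 1)
      rw [ENNReal.ofReal_le_iff_le_toReal h2] at h3
      linarith
  rcases lt_or_ge y 0 with hneg | hpos
  · rw [posPart_eq_zero' hneg.le]; exact zero_le
  · by_contra hlt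
    push_neg at hlt
    rw [posPart_ne_top' h] at hlt
    obtain ⟨r, hr0, hr1, hr2⟩ := ENNReal.lt_iff_exists_real_btwn.mp hlt
    have htr : r < y.toReal := by
      by_contra h'
      exact absurd (ENNReal.ofReal_le_ofReal (not_lt.mp h')) (not_le.mpr hr2)
    have hyr : (r : EReal) < y := by
      conv_rhs => rw [← EReal.coe_toReal h (by intro hb; rw [hb] at hpos; simp at hpos)]
      exact_mod_cast htr
    obtain ⟨n, hn⟩ := lt_iSup_iff.mp hyr
    have hle : ENNReal.ofReal r ≤ posPart (x n) := by
      rw [← posPart_coe' r]; exact posPart_mono' hn.le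
    exact absurd (hle.trans (le_iSup (fun n => posPart (x n)) n)) (not_le.mpr hr1)

lemma ereal_neg_iInf (x : ℕ → EReal) : -(⨅ n, x n) = ⨆ n, -(x n) := by
  apply le_antisymm
  · rw [EReal.neg_le]
    refine le_iInf fun n => ?_
    rw [EReal.neg_le]
    exact le_iSup (fun n => -(x n)) n
  · refine iSup_le fun n => ?_
    rw [EReal.neg_le, neg_neg]
    exact iInf_le x n

/-! ### Prefixes, cylinders, measurability -/

lemma length_prefixList (ω : Path X) (m : ℕ) : (prefixList ω m).length = m := by
  simp [prefixList]

lemma getElem_prefixList (ω : Path X) {m i : ℕ} (h : i < m) :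
    (prefixList ω m)[i]'(by simp [length_prefixList, h]) = ω i := by
  simp [prefixList]

/-- The path extending a finite tuple by an arbitrary fixed state. -/
noncomputable def pathOf {m : ℕ} (v : Fin m → X) : Path X :=
  fun i => if h : i < m then v ⟨i, h⟩ else Classical.arbitrary X

/-- The first `m` coordinates of a path, as a tuple. -/
def proj (m : ℕ) (ω : Path X) : Fin m → X := fun i => ω i

lemma prefixList_pathOf (m : ℕ) (ω : Path X) :
    prefixList (pathOf (proj m ω)) m = prefixList ω m := by
  apply List.ext_getElem (by simp [length_prefixList])
  intro i h1 h2
  have him : i < m := by simpa [length_prefixList] using h1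
  rw [getElem_prefixList _ him, getElem_prefixList _ him]
  simp [pathOf, proj, him]

lemma mem_cyl_ofFn {m : ℕ} (ω : Path X) (v : Fin m → X) :
    ω ∈ cyl (List.ofFn v) ↔ proj m ω = v := by
  have hl : (List.ofFn v).length = m := List.length_ofFn
  show prefixList ω (List.ofFn v).length = List.ofFn v ↔ _
  rw [hl]
  constructor
  · intro hw
    funext i
    have h2 : (prefixList ω m)[(i : ℕ)]'(by simp [length_prefixList, i.isLt]) =
        (List.ofFn v)[(i : ℕ)]'(by simp [i.isLt]) := by
      simp only [hw]
    rw [getElem_prefixList _ i.isLt, List.getElem_ofFn] at h2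
    simpa [proj] using h2
  · intro hv
    apply List.ext_getElem (by simp [length_prefixList])
    intro i h1 h2
    have him : i < m := by simpa [length_prefixList] using h1
    rw [getElem_prefixList _ him, List.getElem_ofFn]
    have hvi := congrFun hv ⟨i, him⟩
    simpa [proj] using hvi

lemma measurable_cyl (z : List X) : MeasurableSet (cyl z) :=
  MeasurableSpace.measurableSet_generateFrom ⟨z, rfl⟩

lemma measurable_proj (m : ℕ) : @Measurable (Path X) (Fin m → X) _ ⊤ (proj m) := by
  intro S _
  have hS : proj m ⁻¹' S = ⋃ v ∈ S, cyl (List.ofFn v) := by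
    ext ω
    simp only [Set.mem_preimage, Set.mem_iUnion]
    constructor
    · intro h; exact ⟨proj m ω, h, (mem_cyl_ofFn ω _).mpr rfl⟩
    · rintro ⟨v, hv, hc⟩; rwa [(mem_cyl_ofFn ω v).mp hc]
  rw [hS]
  exact MeasurableSet.biUnion (Set.to_countable S) fun v _ => measurable_cyl _

lemma NMeas.measurable {m : ℕ} {f : Path X → EReal} (h : NMeas m f) : Measurable f := by
  have hf : f = (fun v : Fin m → X => f (pathOf v)) ∘ proj m := by
    funext ω
    exact h ω (pathOf (proj m ω)) (prefixList_pathOf m ω).symm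
  rw [hf]
  exact Measurable.comp measurable_from_top (measurable_proj m)

/-! ### Integrals of finitary variables -/

lemma lintegral_partition (μ : Measure (Path X)) {m : ℕ} (h : Path X → ℝ≥0∞)
    (hh : ∀ ω, h ω = h (pathOf (proj m ω))) :
    ∫⁻ ω, h ω ∂μ = ∑ v : Fin m → X, h (pathOf v) * μ (cyl (List.ofFn v)) := by
  have hrep : ∀ ω, h ω = ∑ v : Fin m → X,
      Set.indicator (cyl (List.ofFn v)) (fun _ => h (pathOf v)) ω := by
    intro ω
    rw [Finset.sum_eq_single_of_mem (proj m ω) (Finset.mem_univ _)]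
    · rw [Set.indicator_of_mem ((mem_cyl_ofFn ω _).mpr rfl)]
      exact hh ω
    · intro v _ hv
      exact Set.indicator_of_notMem (fun hc => hv ((mem_cyl_ofFn ω v).mp hc).symm) _
  calc ∫⁻ ω, h ω ∂μ
      = ∫⁻ ω, ∑ v : Fin m → X,
          Set.indicator (cyl (List.ofFn v)) (fun _ => h (pathOf v)) ω ∂μ := by
        congr 1; funext ω; exact hrep ω
    _ = ∑ v : Fin m → X, ∫⁻ ω,
          Set.indicator (cyl (List.ofFn v)) (fun _ => h (pathOf v)) ω ∂μ :=
        lintegral_finset_sum _ (fun v _ => measurable_const.indicator (measurable_cyl _))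
    _ = _ :=
        Finset.sum_congr rfl fun v _ => by
          rw [lintegral_indicator_const (measurable_cyl _)]

lemma cylProb_nonneg (p : PreciseTree X) (s z : List X) : 0 ≤ cylProb p.p s z := by
  unfold cylProb
  split_ifs
  · exact Finset.prod_nonneg fun i _ => p.nonneg _ _
  · exact zero_le_one
  · exact le_refl 0

lemma real_max_sub (r : ℝ) : max r 0 - max (-r) 0 = r := by
  rcases le_total r 0 with h | h
  · rw [max_eq_right h, max_eq_left (by linarith)]; ring
  · rw [max_eq_left h, max_eq_right (by linarith)]; ring

lemma ofReal_max (r : ℝ) : ENNReal.ofReal r = ENNReal.ofReal (max r 0) := by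
  rcases le_total r 0 with h | h
  · rw [ENNReal.ofReal_of_nonpos h, max_eq_right h, ENNReal.ofReal_zero]
  · rw [max_eq_left h]

lemma integralE_nmeas {p : PreciseTree X} {s : List X} {μ : Measure (Path X)}
    (hμ : IsTreeMeasure p s μ) {m : ℕ} {f : Path X → EReal} (hf : NMeas m f)
    (B : ℝ) (hB : ∀ ω, -(B : EReal) ≤ f ω ∧ f ω ≤ (B : EReal)) :
    integralE μ f =
      ((∑ v : Fin m → X, (f (pathOf v)).toReal * cylProb p.p s (List.ofFn v) : ℝ) : EReal) := by
  have hnt : ∀ ω, f ω ≠ ⊤ := fun ω => ne_top_of_le_ne_top (EReal.coe_ne_top B) (hB ω).2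
  have hnb : ∀ ω, -(f ω) ≠ ⊤ := by
    intro ω
    have h1 : -(f ω) ≤ (B : EReal) := by
      rw [EReal.neg_le]
      exact_mod_cast (hB ω).1
    exact ne_top_of_le_ne_top (EReal.coe_ne_top B) h1
  set pr : (Fin m → X) → ℝ := fun v => cylProb p.p s (List.ofFn v) with hpr
  have hprn : ∀ v, 0 ≤ pr v := fun v => cylProb_nonneg p _ _
  have hfv : ∀ ω, f ω = f (pathOf (proj m ω)) :=
    fun ω => hf ω (pathOf (proj m ω)) (prefixList_pathOf m ω).symm
  have hA : (∫⁻ ω, posPart (f ω) ∂μ) =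
      ENNReal.ofReal (∑ v : Fin m → X, max (f (pathOf v)).toReal 0 * pr v) := by
    rw [lintegral_partition μ (m := m) (fun ω => posPart (f ω)) (fun ω => congrArg posPart (hfv ω))]
    rw [ENNReal.ofReal_sum_of_nonneg (fun v _ => mul_nonneg (le_max_right _ _) (hprn v))]
    refine Finset.sum_congr rfl fun v _ => ?_
    rw [posPart_ne_top' (hnt _), hμ.2 (List.ofFn v), ofReal_max ((f (pathOf v)).toReal),
      ← ENNReal.ofReal_mul (le_max_right _ _)]
  have hC : (∫⁻ ω, posPart (-(f ω)) ∂μ) =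
      ENNReal.ofReal (∑ v : Fin m → X, max (-(f (pathOf v)).toReal) 0 * pr v) := by
    rw [lintegral_partition μ (m := m) (fun ω => posPart (-(f ω))) (fun ω => congrArg (fun x => posPart (-x)) (hfv ω))]
    rw [ENNReal.ofReal_sum_of_nonneg (fun v _ => mul_nonneg (le_max_right _ _) (hprn v))]
    refine Finset.sum_congr rfl fun v _ => ?_
    rw [posPart_ne_top' (hnb _), hμ.2 (List.ofFn v), EReal.toReal_neg_eq,
      ofReal_max (-(f (pathOf v)).toReal), ← ENNReal.ofReal_mul (le_max_right _ _)]
  have ha : (0:ℝ) ≤ ∑ v : Fin m → X, max (f (pathOf v)).toReal 0 * pr v :=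
    Finset.sum_nonneg fun v _ => mul_nonneg (le_max_right _ _) (hprn v)
  have hc : (0:ℝ) ≤ ∑ v : Fin m → X, max (-(f (pathOf v)).toReal) 0 * pr v :=
    Finset.sum_nonneg fun v _ => mul_nonneg (le_max_right _ _) (hprn v)
  rw [integralE, hA, hC, EReal.coe_ennreal_ofReal, EReal.coe_ennreal_ofReal,
    max_eq_left ha, max_eq_left hc, ← EReal.coe_sub]
  norm_cast
  rw [← Finset.sum_sub_distrib]
  exact Finset.sum_congr rfl fun v _ => by rw [← sub_mul, real_max_sub]

lemma integralE_mono (μ : Measure (Path X)) {f g : Path X → EReal} (h : ∀ ω, f ω ≤ g ω) :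
    integralE μ f ≤ integralE μ g :=
  EReal.sub_le_sub
    (EReal.coe_ennreal_le_coe_ennreal_iff.mpr (lintegral_mono fun ω => posPart_mono' (h ω)))
    (EReal.coe_ennreal_le_coe_ennreal_iff.mpr
      (lintegral_mono fun ω => posPart_mono' (EReal.neg_le_neg_iff.mpr (h ω))))

lemma integralE_le_upperInt (μ : Measure (Path X)) (f : Path X → EReal) :
    integralE μ f ≤ upperInt μ f :=
  le_sInf (by rintro a ⟨g, hg, hb, hfg, rfl⟩; exact integralE_mono μ hfg)

lemma upperInt_le_integralE (μ : Measure (Path X)) {f : Path X → EReal} (hm : Measurable f)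
    (B : ℝ) (hB : ∀ ω, (B : EReal) ≤ f ω) : upperInt μ f ≤ integralE μ f :=
  sInf_le ⟨f, hm, ⟨B, hB⟩, fun ω => le_rfl, rfl⟩

lemma upperInt_mono (μ : Measure (Path X)) {f g : Path X → EReal} (h : ∀ ω, f ω ≤ g ω) :
    upperInt μ f ≤ upperInt μ g := by
  refine le_sInf ?_
  rintro a ⟨k, hk, hb, hgk, rfl⟩
  exact sInf_le ⟨k, hk, hb, fun ω => (h ω).trans (hgk ω), rfl⟩

/-! ### Downward convergence of the integral -/

lemma iInf_coe_sub (A C : ℕ → ℝ≥0∞) (hA : Antitone A) (hC : Monotone C) (hAfin : A 0 ≠ ⊤) :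
    ⨅ n, ((A n : EReal) - (C n : EReal)) =
      ((⨅ n, A n : ℝ≥0∞) : EReal) - ((⨆ n, C n : ℝ≥0∞) : EReal) := by
  have t1 : Tendsto (fun n => ((A n : ℝ≥0∞) : EReal)) atTop
      (nhds ((⨅ n, A n : ℝ≥0∞) : EReal)) :=
    (continuous_coe_ennreal_ereal.tendsto _).comp (tendsto_atTop_iInf hA)
  have t2 : Tendsto (fun n => (-((C n : ℝ≥0∞) : EReal))) atTop
      (nhds (-((⨆ n, C n : ℝ≥0∞) : EReal))) :=
    (((continuous_coe_ennreal_ereal.tendsto _).comp (tendsto_atTop_iSup hC))).neg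
  have hne : ((⨅ n, A n : ℝ≥0∞) : EReal) ≠ ⊤ := by
    rw [Ne, EReal.coe_ennreal_eq_top_iff]
    exact fun h => hAfin (top_le_iff.mp (h ▸ iInf_le A 0))
  have hadd : ContinuousAt (fun p : EReal × EReal => p.1 + p.2)
      (((⨅ n, A n : ℝ≥0∞) : EReal), -((⨆ n, C n : ℝ≥0∞) : EReal)) :=
    EReal.continuousAt_add (Or.inl hne) (Or.inl (EReal.coe_ennreal_ne_bot _))
  have t3 : Tendsto (fun n => ((A n : EReal) + (-((C n : ℝ≥0∞) : EReal)))) atTop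
      (nhds (((⨅ n, A n : ℝ≥0∞) : EReal) + (-((⨆ n, C n : ℝ≥0∞) : EReal)))) :=
    hadd.tendsto.comp (t1.prodMk_nhds t2)
  have hmono : Antitone (fun n => ((A n : EReal) - (C n : EReal))) := fun a b h =>
    EReal.sub_le_sub (EReal.coe_ennreal_le_coe_ennreal_iff.mpr (hA h))
      (EReal.coe_ennreal_le_coe_ennreal_iff.mpr (hC h))
  have t4 := tendsto_atTop_iInf hmono
  have heq : (fun n => (A n : EReal) - (C n : EReal)) =
      fun n => (A n : EReal) + (-((C n : ℝ≥0∞) : EReal)) := by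
    funext n; rw [sub_eq_add_neg]
  rw [sub_eq_add_neg]
  exact tendsto_nhds_unique (heq ▸ t4) t3

lemma integralE_iInf (μ : Measure (Path X)) [IsProbabilityMeasure μ]
    {fn : ℕ → Path X → EReal} (hmeas : ∀ n, Measurable (fn n))
    (B0 : ℝ) (hB0 : ∀ ω, fn 0 ω ≤ (B0 : EReal)) (hanti : Antitone fn) :
    ⨅ n, integralE μ (fn n) = integralE μ (fun ω => ⨅ n, fn n ω) := by
  set A : ℕ → ℝ≥0∞ := fun n => ∫⁻ ω, posPart (fn n ω) ∂μ with hA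
  set C : ℕ → ℝ≥0∞ := fun n => ∫⁻ ω, posPart (-(fn n ω)) ∂μ with hC
  have hAanti : Antitone A := fun a b h => lintegral_mono fun ω => posPart_mono' (hanti h ω)
  have hCmono : Monotone C := fun a b h =>
    lintegral_mono fun ω => posPart_mono' (EReal.neg_le_neg_iff.mpr (hanti h ω))
  have hA0 : A 0 ≠ ⊤ := by
    have hle : A 0 ≤ ENNReal.ofReal B0 := by
      calc A 0 ≤ ∫⁻ _, ENNReal.ofReal B0 ∂μ :=
            lintegral_mono fun ω => by rw [← posPart_coe' B0]; exact posPart_mono' (hB0 ω)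
        _ = ENNReal.ofReal B0 := by simp [lintegral_const]
    exact ne_top_of_le_ne_top ENNReal.ofReal_ne_top hle
  have h1 : ∫⁻ ω, ⨅ n, posPart (fn n ω) ∂μ = ⨅ n, A n := by
    exact lintegral_iInf (f := fun n ω => posPart (fn n ω))
      (fun n => measurable_posPart'.comp (hmeas n))
      (fun a b h ω => posPart_mono' (hanti h ω)) hA0
  have hAlim : (⨅ n, A n) = ∫⁻ ω, posPart (⨅ n, fn n ω) ∂μ := by
    rw [← h1]; congr 1; funext ω; rw [posPart_iInf']
  have h2 : ∫⁻ ω, ⨆ n, posPart (-(fn n ω)) ∂μ = ⨆ n, C n := by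
    exact lintegral_iSup (f := fun n ω => posPart (-(fn n ω)))
      (fun n => measurable_posPart'.comp (hmeas n).neg)
      (fun a b h ω => posPart_mono' (EReal.neg_le_neg_iff.mpr (hanti h ω)))
  have hClim : (⨆ n, C n) = ∫⁻ ω, posPart (-(⨅ n, fn n ω)) ∂μ := by
    rw [← h2]; congr 1; funext ω; rw [ereal_neg_iInf, posPart_iSup']
  calc ⨅ n, integralE μ (fn n) = ⨅ n, ((A n : EReal) - (C n : EReal)) := rfl
    _ = ((⨅ n, A n : ℝ≥0∞) : EReal) - ((⨆ n, C n : ℝ≥0∞) : EReal) :=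
        iInf_coe_sub A C hAanti hCmono hA0
    _ = integralE μ (fun ω => ⨅ n, fn n ω) := by rw [hAlim, hClim]; rfl

/-! ### Compatible trees and the credal state space -/

/-- Build a precise tree from a selection of mass functions from the credal sets. -/
def mkTree (P : ImpreciseTree X) (q : List X → X → ℝ) (hq : ∀ t, q t ∈ P.sets t) :
    PreciseTree X where
  p := q
  nonneg := fun t x => (P.prob' t (q t) (hq t)).1 x
  sum_one := fun t => (P.prob' t (q t) (hq t)).2

/-- The global credal state space: all selections of mass functions. -/
def credal (P : ImpreciseTree X) : Set (List X → X → ℝ) := Set.pi Set.univ P.sets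

lemma isCompact_sets (P : ImpreciseTree X) (t : List X) : IsCompact (P.sets t) := by
  have hb : Bornology.IsBounded (P.sets t) := by
    apply Bornology.IsBounded.subset (Metric.isBounded_closedBall (x := (0 : X → ℝ)) (r := 1))
    intro q hq
    obtain ⟨hq0, hq1⟩ := P.prob' t q hq
    rw [Metric.mem_closedBall, dist_pi_le_iff zero_le_one]
    intro x
    have hle : q x ≤ 1 := by
      calc q x ≤ ∑ y, q y := Finset.single_le_sum (fun y _ => hq0 y) (Finset.mem_univ x)
        _ = 1 := hq1
    simp only [Pi.zero_apply, Real.dist_eq, sub_zero]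
    exact abs_le.mpr ⟨by linarith [hq0 x], hle⟩
  exact Metric.isCompact_of_isClosed_isBounded (P.closed' t) hb

lemma isCompact_credal (P : ImpreciseTree X) : IsCompact (credal P) :=
  isCompact_univ_pi fun t => isCompact_sets P t

lemma continuous_cylProb (s z : List X) :
    Continuous fun q : List X → X → ℝ => cylProb q s z := by
  unfold cylProb
  by_cases h1 : s.length < z.length ∧ z.take s.length = s
  · simp only [if_pos h1]
    exact continuous_finset_prod _ fun i _ =>
      (continuous_apply (z.getD i (Classical.arbitrary X))).comp (continuous_apply (z.take i))
  · simp only [if_neg h1]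
    by_cases h2 : z.length ≤ s.length ∧ s.take z.length = z
    · simp only [if_pos h2]; exact continuous_const
    · simp only [if_neg h2]; exact continuous_const

theorem stmt6' (P : ImpreciseTree X)
    (Pm : PreciseTree X → List X → Measure (Path X))
    (hPm : ∀ (p : PreciseTree X) (s : List X), IsTreeMeasure p s (Pm p s))
    (s : List X) (fn : ℕ → Path X → EReal) (f : Path X → EReal)
    (hfin : ∀ n, IsFinGamble (fn n)) (hanti : Antitone fn)
    (hlim : ∀ ω, f ω = ⨅ n, fn n ω) :
    Tendsto (fun n => muUE Pm P (fn n) s) atTop (nhds (muUE Pm P f s)) := by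
  classical
  have hm : ∀ n, ∃ m, NMeas m (fn n) := fun n => (hfin n).1
  set m : ℕ → ℕ := fun n => (hm n).choose with hmdef
  have hmspec : ∀ n, NMeas (m n) (fn n) := fun n => (hm n).choose_spec
  have hb : ∀ n, ∃ B : ℝ, ∀ ω, -(B : EReal) ≤ fn n ω ∧ fn n ω ≤ (B : EReal) :=
    fun n => (hfin n).2
  set B : ℕ → ℝ := fun n => (hb n).choose with hBdef
  have hBspec : ∀ n ω, -((B n : ℝ) : EReal) ≤ fn n ω ∧ fn n ω ≤ ((B n : ℝ) : EReal) :=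
    fun n => (hb n).choose_spec
  have hmeas : ∀ n, Measurable (fn n) := fun n => (hmspec n).measurable
  have hUanti : Antitone fun n => muUE Pm P (fn n) s := by
    intro a b hab
    exact iSup_mono fun p => iSup_mono fun _ => upperInt_mono _ fun ω => hanti hab ω
  have ht : Tendsto (fun n => muUE Pm P (fn n) s) atTop (nhds (⨅ n, muUE Pm P (fn n) s)) :=
    tendsto_atTop_iInf hUanti
  suffices hkey : (⨅ n, muUE Pm P (fn n) s) = muUE Pm P f s by rwa [hkey] at ht
  refine le_antisymm ?_ (le_iInf fun n => iSup_mono fun p => iSup_mono fun _ =>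
    upperInt_mono _ fun ω => by rw [hlim ω]; exact iInf_le _ n)
  set c := ⨅ n, muUE Pm P (fn n) s with hc
  set H : ℕ → (List X → X → ℝ) → ℝ := fun n q =>
    ∑ v : Fin (m n) → X, ((fn n) (pathOf v)).toReal * cylProb q s (List.ofFn v) with hH
  -- the upper integral of `fn n` is the expectation, a continuous function of the tree
  have hUI : ∀ (n : ℕ) (p : PreciseTree X),
      upperInt (Pm p s) (fn n) = integralE (Pm p s) (fn n) := by
    intro n p
    haveI := (hPm p s).1
    exact le_antisymm
      (upperInt_le_integralE _ (hmeas n) (-(B n))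
        (fun ω => by rw [EReal.coe_neg]; exact (hBspec n ω).1))
      (integralE_le_upperInt _ _)
  have hHval : ∀ (n : ℕ) (p : PreciseTree X),
      upperInt (Pm p s) (fn n) = ((H n p.p : ℝ) : EReal) := by
    intro n p
    rw [hUI n p]
    exact integralE_nmeas (hPm p s) (hmspec n) (B n) (hBspec n)
  have hHcont : ∀ n, Continuous (H n) := fun n =>
    continuous_finset_sum _ fun v _ =>
      continuous_const.mul (continuous_cylProb s (List.ofFn v))
  have hHanti : ∀ q, (∀ t, q t ∈ P.sets t) → ∀ a b : ℕ, a ≤ b → H b q ≤ H a q := by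
    intro q hq a b hab
    have h1 := hHval a (mkTree P q hq)
    have h2 := hHval b (mkTree P q hq)
    have h3 : upperInt (Pm (mkTree P q hq) s) (fn b) ≤
        upperInt (Pm (mkTree P q hq) s) (fn a) :=
      upperInt_mono _ fun ω => hanti hab ω
    rw [h1, h2] at h3
    exact_mod_cast h3
  have hq0 : ∃ q, q ∈ credal P :=
    ⟨fun t => (P.nonempty' t).choose, fun t _ => (P.nonempty' t).choose_spec⟩
  have hcA : ∀ n, ∃ q ∈ credal P, c ≤ ((H n q : ℝ) : EReal) := by
    intro n
    obtain ⟨qn, hqn, hmx⟩ := (isCompact_credal P).exists_isMaxOn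
      ⟨hq0.choose, hq0.choose_spec⟩ ((hHcont n).continuousOn)
    refine ⟨qn, hqn, le_trans (iInf_le _ n) ?_⟩
    refine iSup_le fun p => iSup_le fun hp => ?_
    rw [hHval n p]
    have : H n p.p ≤ H n qn := hmx (fun t _ => hp t)
    exact_mod_cast this
  have hclosed : IsClosed {q : List X → X → ℝ | c ≤ ((H 0 q : ℝ) : EReal)} := by
    have : {q : List X → X → ℝ | c ≤ ((H 0 q : ℝ) : EReal)} =
        (H 0) ⁻¹' ((fun r : ℝ => (r : EReal)) ⁻¹' Set.Ici c) := rfl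
    rw [this]
    exact ((isClosed_Ici.preimage continuous_coe_real_ereal).preimage (hHcont 0))
  set A : ℕ → Set (List X → X → ℝ) := fun n =>
    credal P ∩ {q | c ≤ ((H n q : ℝ) : EReal)} with hA
  have hAclosed : ∀ n, IsClosed (A n) := by
    intro n
    refine IsClosed.inter ?_ ?_
    · exact isClosed_set_pi fun t _ => P.closed' t
    · have : {q : List X → X → ℝ | c ≤ ((H n q : ℝ) : EReal)} =
          (H n) ⁻¹' ((fun r : ℝ => (r : EReal)) ⁻¹' Set.Ici c) := rfl
      rw [this]
      exact ((isClosed_Ici.preimage continuous_coe_real_ereal).preimage (hHcont n))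
  have hAsub : ∀ n, A (n + 1) ⊆ A n := by
    rintro n q ⟨hq, hcq⟩
    have hcq' : c ≤ ((H (n + 1) q : ℝ) : EReal) := hcq
    have hmon := hHanti q (fun t => hq t (Set.mem_univ t)) n (n + 1) (Nat.le_succ n)
    exact ⟨hq, show c ≤ ((H n q : ℝ) : EReal) from
      le_trans hcq' (by exact_mod_cast hmon)⟩
  have hAne : ∀ n, (A n).Nonempty := by
    intro n
    obtain ⟨q, hq, hcq⟩ := hcA n
    exact ⟨q, hq, hcq⟩
  have hA0 : IsCompact (A 0) :=
    (isCompact_credal P).inter_right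
      (by
        have : {q : List X → X → ℝ | c ≤ ((H 0 q : ℝ) : EReal)} =
            (H 0) ⁻¹' ((fun r : ℝ => (r : EReal)) ⁻¹' Set.Ici c) := rfl
        rw [this]
        exact ((isClosed_Ici.preimage continuous_coe_real_ereal).preimage (hHcont 0)))
  obtain ⟨qs, hqs⟩ := IsCompact.nonempty_iInter_of_sequence_nonempty_isCompact_isClosed
    A hAsub hAne hA0 hAclosed
  have hqK : ∀ t, qs t ∈ P.sets t :=
    fun t => ((Set.mem_iInter.mp hqs 0).1) t (Set.mem_univ t)
  set ps := mkTree P qs hqK with hps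
  haveI := (hPm ps s).1
  have hcn : ∀ n, c ≤ integralE (Pm ps s) (fn n) := by
    intro n
    have h := (Set.mem_iInter.mp hqs n).2
    rw [← hUI n ps, hHval n ps]
    exact h
  calc c ≤ ⨅ n, integralE (Pm ps s) (fn n) := le_iInf hcn
    _ = integralE (Pm ps s) (fun ω => ⨅ n, fn n ω) :=
        integralE_iInf _ hmeas (B 0) (fun ω => (hBspec 0 ω).2) hanti
    _ = integralE (Pm ps s) f := by
        congr 1
        funext ω
        exact (hlim ω).symm
    _ ≤ upperInt (Pm ps s) f := integralE_le_upperInt _ _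
    _ ≤ muUE Pm P f s := le_iSup₂ (f := fun (p : PreciseTree X) (_ : Compatible p P) =>
        upperInt (Pm p s) f) ps hqK

theorem stmt6 (P : ImpreciseTree X)
    (Pm : PreciseTree X → List X → Measure (Path X))
    (hPm : ∀ (p : PreciseTree X) (s : List X), IsTreeMeasure p s (Pm p s))
    (s : List X) (fn : ℕ → Path X → EReal) (f : Path X → EReal)
    (hfin : ∀ n, IsFinGamble (fn n)) (hanti : Antitone fn)
    (hlim : ∀ ω, f ω = ⨅ n, fn n ω) :
    Tendsto (fun n => muUE Pm P (fn n) s) atTop (nhds (muUE Pm P f s)) := by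
  exact stmt6' P Pm hPm s fn f hfin hanti hlim

end UEPaper
end

section
/- For every upper expectation tree Q̄, every situation s, and every pointwise non-increasing sequence (f_n) of finitary gambles with pointwise limit f = inf_n f_n, one has lim_{n→∞} Ē_Q̄(f_n|s) = Ē_Q̄(f|s). -/
open Filter MeasureTheory Topology
open scoped ENNReal

namespace UEPaper

variable {X : Type} [Fintype X] [Nonempty X] [DecidableEq X]

set_option maxHeartbeats 1000000 in
-- basic prefixList lemmas
lemma prefixList_length (ω : Path X) (k : ℕ) : (prefixList ω k).length = k := by
  simp [prefixList]

lemma prefixList_take (ω : Path X) {j m : ℕ} (h : j ≤ m) :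
    (prefixList ω m).take j = prefixList ω j := by
  simp [prefixList, ← List.map_take, List.take_range, Nat.min_eq_left h]

lemma mem_cyl_prefixList (ω : Path X) (m : ℕ) : ω ∈ cyl (prefixList ω m) := by
  show prefixList ω (prefixList ω m).length = prefixList ω m
  rw [prefixList_length]

lemma mem_cyl_take {ω : Path X} {t : List X} (h : ω ∈ cyl t) {j : ℕ} (hj : j ≤ t.length) :
    ω ∈ cyl (t.take j) := by
  have h' : prefixList ω t.length = t := h
  show prefixList ω (t.take j).length = t.take j
  rw [List.length_take, Nat.min_eq_left hj, ← h', prefixList_take ω hj]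

lemma cyl_eq_iInter (t : List X) :
    cyl t = ⋂ i : Fin t.length, {ω : Path X | ω i.1 = t.get i} := by
  ext ω
  simp only [Set.mem_iInter, Set.mem_setOf_eq]
  constructor
  · intro h i
    have h' : prefixList ω t.length = t := h
    have h2 : i.1 < (prefixList ω t.length).length := by
      rw [prefixList_length]; exact i.2
    have h3 : (prefixList ω t.length)[i.1]'h2 = t[i.1]'i.2 := by
      congr 1
    simpa [prefixList] using h3
  · intro h
    show prefixList ω t.length = t
    apply List.ext_getElem (by rw [prefixList_length])
    intro i h1 h2
    simp only [prefixList, List.getElem_map, List.getElem_range]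
    exact h ⟨i, h2⟩


section Top
variable [TopologicalSpace X] [DiscreteTopology X]

lemma isOpen_cyl (t : List X) : IsOpen (cyl t) := by
  rw [cyl_eq_iInter]
  refine isOpen_iInter_of_finite fun i => ?_
  have : {ω : Path X | ω i.1 = t.get i} = (fun ω : Path X => ω i.1) ⁻¹' {t.get i} := rfl
  rw [this]
  exact (continuous_apply i.1).isOpen_preimage _ (isOpen_discrete _)

lemma isClosed_cyl (t : List X) : IsClosed (cyl t) := by
  rw [cyl_eq_iInter]
  refine isClosed_iInter fun i => ?_
  have : {ω : Path X | ω i.1 = t.get i} = (fun ω : Path X => ω i.1) ⁻¹' {t.get i} := rfl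
  rw [this]
  exact IsClosed.preimage (continuous_apply i.1) (isClosed_discrete _)

end Top

-- Q lemmas
lemma Q_le (Q : UpperExpTree X) (s : List X) (f : X → ℝ) (r : ℝ) (h : ∀ x, f x ≤ r) :
    Q.Q s f ≤ r :=
  (Q.le_sup s f).trans (ciSup_le h)

lemma Q_const_le (Q : UpperExpTree X) (s : List X) (r : ℝ) :
    Q.Q s (fun _ => r) ≤ r := Q_le Q s _ r fun _ => le_rfl

lemma Q_add_const (Q : UpperExpTree X) (s : List X) (f : X → ℝ) (r : ℝ) :
    Q.Q s (fun x => f x + r) ≤ Q.Q s f + r := by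
  have h : (fun x => f x + r) = f + (fun _ => r) := rfl
  rw [h]
  exact (Q.subadd s f _).trans (add_le_add_right (Q_const_le Q s r) _)

-- gtG lemmas
lemma gtG_mono (Q : UpperExpTree X) {f g : Path X → ℝ} (s : List X)
    (h : ∀ ω ∈ cyl s, f ω ≤ g ω) : gtG Q f s ≤ gtG Q g s := by
  apply sInf_le_sInf
  rintro a ⟨M, hM, hMb, hMl, rfl⟩
  exact ⟨M, hM, hMb, fun ω hω => le_trans (EReal.coe_le_coe_iff.2 (h ω hω)) (hMl ω hω), rfl⟩

-- EReal lattice lemmas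
lemma ereal_iInf_sup (a : ℕ → EReal) (c : EReal) :
    (⨅ n, a n) ⊔ c = ⨅ n, (a n ⊔ c) := by
  apply le_antisymm
  · exact le_iInf fun n => sup_le_sup_right (iInf_le _ _) _
  · rcases le_total c (⨅ n, a n) with h | h
    · rw [sup_eq_left.2 h]
      exact le_iInf fun n => iInf_le_of_le n (sup_le (le_refl _) (h.trans (iInf_le _ _)))
    · rw [sup_eq_right.2 h]
      by_cases hn : ∃ n, a n ≤ c
      · obtain ⟨n, hn⟩ := hn
        exact iInf_le_of_le n (sup_le hn le_rfl)
      · push_neg at hn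
        have he : ∀ n, a n ⊔ c = a n := fun n => sup_eq_left.2 (hn n).le
        simp_rw [he]
        exact h

lemma ereal_iInf_inf (a : ℕ → EReal) (d : EReal) :
    (⨅ n, a n) ⊓ d = ⨅ n, (a n ⊓ d) := by
  apply le_antisymm
  · exact le_iInf fun n => inf_le_inf_right _ (iInf_le _ _)
  · exact le_inf (le_iInf fun n => iInf_le_of_le n inf_le_left)
      (iInf_le_of_le 0 inf_le_right)

lemma trunc_ne_bot (x : EReal) (c d : ℝ) : (x ⊔ (c : EReal)) ⊓ (d : EReal) ≠ ⊥ := by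
  have h1 : (⊥ : EReal) < (c : EReal) ⊓ (d : EReal) :=
    lt_inf_iff.2 ⟨EReal.bot_lt_coe c, EReal.bot_lt_coe d⟩
  have h2 : (c : EReal) ⊓ (d : EReal) ≤ (x ⊔ (c : EReal)) ⊓ (d : EReal) :=
    inf_le_inf_right _ le_sup_right
  exact (h1.trans_le h2).ne'

lemma trunc_ne_top (x : EReal) (c d : ℝ) : (x ⊔ (c : EReal)) ⊓ (d : EReal) ≠ ⊤ :=
  (inf_le_right.trans_lt (EReal.coe_lt_top d)).ne

lemma core (Q : UpperExpTree X) (s : List X) (gn : ℕ → Path X → ℝ) (g : Path X → ℝ)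
    (hmeas : ∀ n, ∃ m, ∀ ω ω' : Path X, prefixList ω m = prefixList ω' m → gn n ω = gn n ω')
    (hanti : ∀ k l, k ≤ l → ∀ ω, gn l ω ≤ gn k ω)
    (hconv : ∀ ω, ∀ ε : ℝ, 0 < ε → ∃ n, gn n ω < g ω + ε) :
    (⨅ n, gtG Q (gn n) s) ≤ gtG Q g s := by
  classical
  refine le_sInf ?_
  rintro a ⟨M, hM, ⟨B, hB⟩, hMl, rfl⟩
  have key : ∀ ε : ℝ, 0 < ε → (⨅ n, gtG Q (gn n) s) ≤ ((M s + 2*ε : ℝ) : EReal) := by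
    intro ε hε
    letI : TopologicalSpace X := ⊥
    haveI : DiscreteTopology X := ⟨rfl⟩
    -- local covering property
    have hcov : ∀ ω ∈ cyl s, ∃ m, s.length ≤ m ∧
        ∃ k, ∀ ω' ∈ cyl (prefixList ω m), gn k ω' ≤ M (prefixList ω m) + 2*ε := by
      intro ω hω
      obtain ⟨k, hk⟩ := hconv ω ε hε
      obtain ⟨mk, hmk⟩ := hmeas k
      have hlt : ((g ω - ε : ℝ) : EReal) <
          Filter.liminf (fun j => ((M (prefixList ω j) : ℝ) : EReal)) atTop :=
        lt_of_lt_of_le (EReal.coe_lt_coe_iff.2 (by linarith)) (hMl ω hω)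
      obtain ⟨N, hN⟩ := Filter.eventually_atTop.1 (Filter.eventually_lt_of_lt_liminf hlt)
      refine ⟨max (max N mk) s.length, le_max_right _ _, k, ?_⟩
      intro ω' hω'
      set m := max (max N mk) s.length with hm
      have hmk_le : mk ≤ m := le_trans (le_max_right N mk) (le_max_left _ _)
      have hmem : prefixList ω' m = prefixList ω m := by
        have h' : prefixList ω' (prefixList ω m).length = prefixList ω m := hω'
        rwa [prefixList_length] at h'
      have hpre : prefixList ω' mk = prefixList ω mk := by
        rw [← prefixList_take ω' hmk_le, ← prefixList_take ω hmk_le, hmem]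
      have heq : gn k ω' = gn k ω := hmk ω' ω hpre
      have hMω : (g ω - ε) < M (prefixList ω m) :=
        EReal.coe_lt_coe_iff.1 (hN m (le_trans (le_max_left N mk) (le_max_left _ _)))
      rw [heq]
      linarith
    -- compactness
    set T : Set (List X) :=
      {t | s.length ≤ t.length ∧ ∃ k, ∀ ω' ∈ cyl t, gn k ω' ≤ M t + 2*ε} with hT
    have hcomp : IsCompact (cyl s) := (isClosed_cyl s).isCompact
    have hsub : cyl s ⊆ ⋃ t : T, cyl t.1 := by
      intro ω hω
      obtain ⟨m, hm1, k, hk⟩ := hcov ω hω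
      refine Set.mem_iUnion.2 ⟨⟨prefixList ω m, ⟨?_, k, hk⟩⟩, mem_cyl_prefixList ω m⟩
      rw [prefixList_length]; exact hm1
    obtain ⟨F, hF⟩ := hcomp.elim_finite_subcover (fun t : T => cyl t.1)
      (fun t => isOpen_cyl t.1) hsub
    have hkT : ∀ t : T, ∃ k, ∀ ω' ∈ cyl t.1, gn k ω' ≤ M t.1 + 2*ε := fun t => t.2.2
    choose k' hk' using hkT
    set K := F.sup k' with hK
    set C : Finset (List X) := F.image Subtype.val with hC
    have hCprop : ∀ u ∈ C, s.length ≤ u.length ∧ ∀ ω' ∈ cyl u, gn K ω' ≤ M u + 2*ε := by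
      intro u hu
      obtain ⟨t, htF, rfl⟩ := Finset.mem_image.1 hu
      exact ⟨t.2.1, fun ω' hω' =>
        le_trans (hanti (k' t) K (Finset.le_sup htF) ω') (hk' t ω' hω')⟩
    -- the stopped supermartingale
    set M' : List X → ℝ := fun u =>
      (if h : ∃ j, j ≤ u.length ∧ u.take j ∈ C then M (u.take (Nat.find h)) else M u) + 2*ε
      with hM'
    have hfind_child : ∀ (u : List X) (x : X) (h : ∃ j, j ≤ u.length ∧ u.take j ∈ C),
        ∃ h' : (∃ j, j ≤ (u ++ [x]).length ∧ (u ++ [x]).take j ∈ C),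
          (u ++ [x]).take (Nat.find h') = u.take (Nat.find h) := by
      intro u x h
      have hfh := Nat.find_spec h
      have hlen1 : Nat.find h ≤ (u ++ [x]).length := by
        simp only [List.length_append, List.length_singleton]
        omega
      have htk : (u ++ [x]).take (Nat.find h) = u.take (Nat.find h) :=
        List.take_append_of_le_length hfh.1
      have h' : ∃ j, j ≤ (u ++ [x]).length ∧ (u ++ [x]).take j ∈ C :=
        ⟨Nat.find h, hlen1, by rw [htk]; exact hfh.2⟩
      have h1 : Nat.find h' ≤ Nat.find h := Nat.find_le ⟨hlen1, by rw [htk]; exact hfh.2⟩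
      have hlen2 : Nat.find h' ≤ u.length := h1.trans hfh.1
      have hsp' := Nat.find_spec h'
      have htk2 : (u ++ [x]).take (Nat.find h') = u.take (Nat.find h') :=
        List.take_append_of_le_length hlen2
      have h2 : Nat.find h ≤ Nat.find h' :=
        Nat.find_le ⟨hlen2, by rw [← htk2]; exact hsp'.2⟩
      have heq : Nat.find h' = Nat.find h := le_antisymm h1 h2
      exact ⟨h', by rw [htk2, heq]⟩
    have hstopped : ∀ (u : List X) (x : X), (∃ j, j ≤ u.length ∧ u.take j ∈ C) →
        M' (u ++ [x]) = M' u := by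
      intro u x h
      obtain ⟨h', htake⟩ := hfind_child u x h
      simp only [hM']
      rw [dif_pos h', dif_pos h, htake]
    have hunstopped : ∀ (u : List X) (x : X), ¬(∃ j, j ≤ u.length ∧ u.take j ∈ C) →
        M' (u ++ [x]) = M (u ++ [x]) + 2*ε := by
      intro u x h
      by_cases h' : ∃ j, j ≤ (u ++ [x]).length ∧ (u ++ [x]).take j ∈ C
      · have hfind : Nat.find h' = u.length + 1 := by
          rw [Nat.find_eq_iff]
          constructor
          · have hfull : (u ++ [x]).take (u.length + 1) = u ++ [x] := by
              have hl : (u ++ [x]).length = u.length + 1 := by simp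
              rw [← hl, List.take_length]
            obtain ⟨j, hj1, hj2⟩ := h'
            have hj1' : j ≤ u.length + 1 := by
              simpa using hj1
            rcases Nat.lt_or_ge j (u.length + 1) with hltj | hgej
            · exact absurd ⟨j, Nat.lt_succ_iff.1 hltj, by
                rwa [List.take_append_of_le_length (Nat.lt_succ_iff.1 hltj)] at hj2⟩ h
            · have hje : j = u.length + 1 := le_antisymm hj1' hgej
              refine ⟨by simp, ?_⟩
              rw [hfull]
              rw [hje] at hj2
              rwa [hfull] at hj2
          · rintro m hm ⟨hm1, hm2⟩
            have hmle : m ≤ u.length := Nat.lt_succ_iff.1 hm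
            exact h ⟨m, hmle, by rwa [List.take_append_of_le_length hmle] at hm2⟩
        simp only [hM']
        rw [dif_pos h', hfind]
        have hfull : (u ++ [x]).take (u.length + 1) = u ++ [x] := by
          have hl : (u ++ [x]).length = u.length + 1 := by simp
          rw [← hl, List.take_length]
        rw [hfull]
      · simp only [hM']
        rw [dif_neg h']
    have hsm : IsSupermart Q M' := by
      intro u
      by_cases h : ∃ j, j ≤ u.length ∧ u.take j ∈ C
      · have hcf : (fun x => M' (u ++ [x])) = fun _ => M' u :=
          funext fun x => hstopped u x h
        rw [hcf]
        exact Q_const_le Q u (M' u)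
      · have hcf : (fun x => M' (u ++ [x])) = fun x => M (u ++ [x]) + 2*ε :=
          funext fun x => hunstopped u x h
        rw [hcf]
        have h1 : Q.Q u (fun x => M (u ++ [x]) + 2*ε) ≤ Q.Q u (fun x => M (u ++ [x])) + 2*ε :=
          Q_add_const Q u _ _
        have h2 := hM u
        have hMu : M' u = M u + 2*ε := by
          simp only [hM']; rw [dif_neg h]
        rw [hMu]
        linarith
    have hbdd : ∃ B', ∀ t, B' ≤ M' t := by
      refine ⟨B + 2*ε, fun u => ?_⟩
      have hb : B ≤ (if h : ∃ j, j ≤ u.length ∧ u.take j ∈ C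
          then M (u.take (Nat.find h)) else M u) := by
        split <;> exact hB _
      simp only [hM']
      linarith
    have hlimf : ∀ ω ∈ cyl s, ((gn K ω : ℝ) : EReal) ≤
        Filter.liminf (fun k => ((M' (prefixList ω k) : ℝ) : EReal)) atTop := by
      intro ω hω
      obtain ⟨t, htF, hωt⟩ := Set.mem_iUnion₂.1 (hF hω)
      have hex : ∃ j, prefixList ω j ∈ C := ⟨t.1.length, by
        have h' : prefixList ω t.1.length = t.1 := hωt
        rw [h']
        exact Finset.mem_image_of_mem _ htF⟩
      set j₀ := Nat.find hex with hj₀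
      have hj₀le : j₀ ≤ t.1.length := Nat.find_le (by
        have h' : prefixList ω t.1.length = t.1 := hωt
        rw [h']
        exact Finset.mem_image_of_mem _ htF)
      have hj₀C : prefixList ω j₀ ∈ C := Nat.find_spec hex
      have hev : ∀ m, t.1.length ≤ m → M' (prefixList ω m) = M (prefixList ω j₀) + 2*ε := by
        intro m hm
        have hj₀m : j₀ ≤ m := hj₀le.trans hm
        have hval : ∃ j, j ≤ (prefixList ω m).length ∧ (prefixList ω m).take j ∈ C :=
          ⟨j₀, by rw [prefixList_length]; exact hj₀m, by rw [prefixList_take ω hj₀m]; exact hj₀C⟩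
        have hfind : Nat.find hval = j₀ := by
          apply le_antisymm
          · exact Nat.find_le ⟨by rw [prefixList_length]; exact hj₀m,
              by rw [prefixList_take ω hj₀m]; exact hj₀C⟩
          · have hsp := Nat.find_spec hval
            have hle : Nat.find hval ≤ m :=
              le_trans hsp.1 (le_of_eq (prefixList_length ω m))
            refine Nat.find_le ?_
            have h2 := hsp.2
            rwa [prefixList_take ω hle] at h2
        simp only [hM']
        rw [dif_pos hval, hfind, prefixList_take ω hj₀m]
      have hevf : ∀ᶠ m in (atTop : Filter ℕ),
          ((M' (prefixList ω m) : ℝ) : EReal) = ((M (prefixList ω j₀) + 2*ε : ℝ) : EReal) :=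
        Filter.eventually_atTop.2 ⟨t.1.length, fun m hm => by rw [hev m hm]⟩
      rw [Filter.liminf_congr hevf, Filter.liminf_const]
      exact EReal.coe_le_coe_iff.2 ((hCprop _ hj₀C).2 ω (mem_cyl_prefixList ω j₀))
    have hM's : M' s = M s + 2*ε := by
      simp only [hM']
      by_cases h : ∃ j, j ≤ s.length ∧ s.take j ∈ C
      · rw [dif_pos h]
        have hsp := Nat.find_spec h
        have hCp := hCprop _ hsp.2
        have hlen : (s.take (Nat.find h)).length = Nat.find h := by
          rw [List.length_take, Nat.min_eq_left hsp.1]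
        have hfe : Nat.find h = s.length := by
          have := hCp.1
          rw [hlen] at this
          omega
        rw [hfe, List.take_length]
      · rw [dif_neg h]
    have hmemInf : gtG Q (gn K) s ≤ ((M' s : ℝ) : EReal) :=
      sInf_le ⟨M', hsm, hbdd, hlimf, rfl⟩
    calc (⨅ n, gtG Q (gn n) s) ≤ gtG Q (gn K) s := iInf_le _ K
    _ ≤ ((M' s : ℝ) : EReal) := hmemInf
    _ = ((M s + 2*ε : ℝ) : EReal) := by rw [hM's]
  -- conclude from key
  by_contra hcon
  push_neg at hcon
  obtain ⟨c, hc1, hc2⟩ := exists_between hcon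
  induction c using EReal.rec with
  | bot => exact absurd hc1 (by simp)
  | coe c' =>
    have hlt : M s < c' := EReal.coe_lt_coe_iff.1 hc1
    have hk := key ((c' - M s)/2) (by linarith)
    rw [show M s + 2*((c' - M s)/2) = c' by ring] at hk
    exact absurd hc2 (not_lt.2 hk)
  | top => exact absurd hc2 (not_lt.2 le_top)


lemma toReal_lt_of_lt_coe {x : EReal} {r : ℝ} (h : x < (r : EReal)) (hx : x ≠ ⊥) :
    x.toReal < r := by
  have hxt : x ≠ ⊤ := (h.trans (EReal.coe_lt_top r)).ne
  have hx' : x = ((x.toReal : ℝ) : EReal) := (EReal.coe_toReal hxt hx).symm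
  rw [hx'] at h
  exact EReal.coe_lt_coe_iff.1 h

theorem stmt7 (Q : UpperExpTree X) (s : List X)
    (fn : ℕ → Path X → EReal) (f : Path X → EReal)
    (hfin : ∀ n, IsFinGamble (fn n)) (hanti : Antitone fn)
    (hlim : ∀ ω, f ω = ⨅ n, fn n ω) :
    Tendsto (fun n => gtUE Q (fn n) s) atTop (nhds (gtUE Q f s)) := by
  classical
  obtain ⟨B₀, hB₀⟩ := (hfin 0).2
  have tmono : ∀ (u v : Path X → EReal) (c d : ℝ), (∀ ω, u ω ≤ v ω) →
      ∀ ω, ((u ω ⊔ (c : EReal)) ⊓ (d : EReal)).toReal ≤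
        ((v ω ⊔ (c : EReal)) ⊓ (d : EReal)).toReal := by
    intro u v c d h ω
    exact EReal.toReal_le_toReal (inf_le_inf_right _ (sup_le_sup_right (h ω) _))
      (trunc_ne_bot _ c d) (trunc_ne_top _ c d)
  have hUEmono : ∀ u v : Path X → EReal, (∀ ω, u ω ≤ v ω) → gtUE Q u s ≤ gtUE Q v s := by
    intro u v h
    simp only [gtUE, gtBB]
    exact iInf_mono fun c => iSup_mono fun d => gtG_mono Q s fun ω _ => tmono u v c d h ω
  have hfle : ∀ n ω, f ω ≤ fn n ω := fun n ω => by
    rw [hlim ω]; exact iInf_le _ n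
  have hmono_seq : Antitone (fun n => gtUE Q (fn n) s) := fun n m hnm =>
    hUEmono (fn m) (fn n) (fun ω => hanti hnm ω)
  have hEq : gtUE Q f s = ⨅ n, gtUE Q (fn n) s := by
    apply le_antisymm
    · exact le_iInf fun n => hUEmono f (fn n) (hfle n)
    · have hmain : ∀ c : ℝ, (⨅ n, gtUE Q (fn n) s) ≤
          gtBB Q (fun ω => f ω ⊔ (c : EReal)) s := by
        intro c
        set d₀ : ℝ := max B₀ c with hd₀
        have hBd₀ : ∀ n ω, fn n ω ⊔ (c : EReal) ≤ ((d₀ : ℝ) : EReal) := by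
          intro n ω
          refine sup_le ?_ (EReal.coe_le_coe_iff.2 (le_max_right _ _))
          exact le_trans (hanti (Nat.zero_le n) ω)
            (le_trans (hB₀ ω).2 (EReal.coe_le_coe_iff.2 (le_max_left _ _)))
        have hcore := core Q s
          (fun n ω => ((fn n ω ⊔ (c : EReal)) ⊓ ((d₀ : ℝ) : EReal)).toReal)
          (fun ω => ((f ω ⊔ (c : EReal)) ⊓ ((d₀ : ℝ) : EReal)).toReal)
          (fun n => by
            obtain ⟨m, hm⟩ := (hfin n).1
            exact ⟨m, fun ω ω' h => by rw [hm ω ω' h]⟩)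
          (fun k l hkl ω =>
            EReal.toReal_le_toReal (inf_le_inf_right _ (sup_le_sup_right (hanti hkl ω) _))
              (trunc_ne_bot _ _ _) (trunc_ne_top _ _ _))
          (by
            intro ω ε hε
            have hinf : (⨅ n, (fn n ω ⊔ (c : EReal)) ⊓ ((d₀ : ℝ) : EReal)) =
                (f ω ⊔ (c : EReal)) ⊓ ((d₀ : ℝ) : EReal) := by
              rw [hlim ω, ereal_iInf_sup, ereal_iInf_inf]
            have hyb : (f ω ⊔ (c : EReal)) ⊓ ((d₀ : ℝ) : EReal) ≠ ⊥ := trunc_ne_bot _ _ _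
            have hyt : (f ω ⊔ (c : EReal)) ⊓ ((d₀ : ℝ) : EReal) ≠ ⊤ := trunc_ne_top _ _ _
            have hy : (f ω ⊔ (c : EReal)) ⊓ ((d₀ : ℝ) : EReal) =
                ((((f ω ⊔ (c : EReal)) ⊓ ((d₀ : ℝ) : EReal)).toReal : ℝ) : EReal) :=
              (EReal.coe_toReal hyt hyb).symm
            have hlt : (⨅ n, (fn n ω ⊔ (c : EReal)) ⊓ ((d₀ : ℝ) : EReal)) <
                ((((f ω ⊔ (c : EReal)) ⊓ ((d₀ : ℝ) : EReal)).toReal + ε : ℝ) : EReal) := by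
              rw [hinf]
              nth_rewrite 1 [hy]
              exact EReal.coe_lt_coe_iff.2 (by linarith)
            obtain ⟨n, hn⟩ := iInf_lt_iff.1 hlt
            exact ⟨n, toReal_lt_of_lt_coe hn (trunc_ne_bot _ _ _)⟩)
        refine le_trans (le_iInf fun n => ?_) (hcore.trans ?_)
        · refine le_trans (iInf_le _ n) ?_
          have h1 : gtUE Q (fn n) s ≤ gtBB Q (fun ω => fn n ω ⊔ (c : EReal)) s :=
            iInf_le (fun c' => gtBB Q (fun ω => fn n ω ⊔ ((c' : ℝ) : EReal)) s) c
          refine h1.trans ?_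
          refine iSup_le fun d => ?_
          refine gtG_mono Q s fun ω _ => ?_
          refine EReal.toReal_le_toReal ?_ (trunc_ne_bot _ _ _) (trunc_ne_top _ _ _)
          exact le_inf inf_le_left (inf_le_left.trans (hBd₀ n ω))
        · exact le_iSup (fun d => gtG Q
            (fun ω => ((f ω ⊔ (c : EReal)) ⊓ ((d : ℝ) : EReal)).toReal) s) d₀
      exact le_iInf hmain
  rw [hEq]
  exact tendsto_atTop_iInf hmono_seq

end UEPaper
end
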